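/- Let F = b₃z³ + xyz + b₂y³ + b₁x³ with b₁b₂b₃ ≠ 0 (real coefficients). If the matrix exponential exp(m(F)) fixes F up to a nonzero scalar (i.e., exp(m(F)).F = c·F for some c ∈ ℂ*, acting by linear substitution of variables), then b₁² = b₂² = b₃². -/

import Mathlib

open MvPolynomial Matrix

noncomputable section

/-- weight of a monomial exponent: α₁!⋯αₙ!/d! -/
def mwt (d : ℕ) {n : ℕ} (α : Fin n →₀ ℕ) : ℝ :=
  (∏ i, ((α i).factorial : ℝ)) / (d.factorial : ℝ)

/-- the SU(n)-invariant Hermitian product on degree-d forms -/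
def herm (d : ℕ) {n : ℕ} (f g : MvPolynomial (Fin n) ℂ) : ℂ :=
  ∑ α ∈ f.support ∪ g.support,
    (starRingEnd ℂ) (coeff α f) * coeff α g * (mwt d α : ℂ)

/-- H(f)ʲᵢ = (1/(d‖f‖²)) ⟨∂f/∂xⱼ, ∂f/∂xᵢ⟩ -/
def Hmat (n d : ℕ) (f : MvPolynomial (Fin n) ℂ) : Matrix (Fin n) (Fin n) ℂ :=
  fun i j => (1 / (d * herm d f f)) * herm (d - 1) (pderiv j f) (pderiv i f)

/-- moment matrix m(f) = 2(H(f) − (d/n)I) -/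
def moment (n d : ℕ) (f : MvPolynomial (Fin n) ℂ) : Matrix (Fin n) (Fin n) ℂ :=
  (2 : ℂ) • (Hmat n d f - ((d : ℂ) / n) • (1 : Matrix (Fin n) (Fin n) ℂ))

/-- square length ‖m(f)‖² = Re Tr(m(f)·m(f)) -/
def sqLen (n d : ℕ) (f : MvPolynomial (Fin n) ℂ) : ℝ :=
  (Matrix.trace (moment n d f * moment n d f)).re

/-- linear substitution action (A.f)(X) = f(A·X) -/
def act (n : ℕ) (A : Matrix (Fin n) (Fin n) ℂ) (f : MvPolynomial (Fin n) ℂ) :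
    MvPolynomial (Fin n) ℂ :=
  aeval (fun i => ∑ j, A i j • X j) f

end

namespace S9
open Finsupp

noncomputable section

/-- exponent vector (a,b,c) -/
def ex (a b c : ℕ) : Fin 3 →₀ ℕ :=
  Finsupp.single 0 a + Finsupp.single 1 b + Finsupp.single 2 c

@[simp] lemma ex_apply0 (a b c : ℕ) : ex a b c 0 = a := by
  simp [ex, Finsupp.single_apply]
@[simp] lemma ex_apply1 (a b c : ℕ) : ex a b c 1 = b := by
  simp [ex, Finsupp.single_apply]
@[simp] lemma ex_apply2 (a b c : ℕ) : ex a b c 2 = c := by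
  simp [ex, Finsupp.single_apply]

@[simp] lemma ex_inj {a b c a' b' c' : ℕ} :
    ex a b c = ex a' b' c' ↔ a = a' ∧ b = b' ∧ c = c' := by
  constructor
  · intro h
    exact ⟨by simpa using DFunLike.congr_fun h 0, by simpa using DFunLike.congr_fun h 1,
      by simpa using DFunLike.congr_fun h 2⟩
  · rintro ⟨rfl, rfl, rfl⟩; rfl

lemma ex_sub (a b c a' b' c' : ℕ) :
    ex a b c - ex a' b' c' = ex (a - a') (b - b') (c - c') := by
  ext i
  fin_cases i <;> simp [Finsupp.tsub_apply]

lemma single0 (n : ℕ) : Finsupp.single (0 : Fin 3) n = ex n 0 0 := by simp [ex]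
lemma single1 (n : ℕ) : Finsupp.single (1 : Fin 3) n = ex 0 n 0 := by simp [ex]
lemma single2 (n : ℕ) : Finsupp.single (2 : Fin 3) n = ex 0 0 n := by simp [ex]

lemma mwt_ex (d a b c : ℕ) :
    mwt d (ex a b c) = (a.factorial * b.factorial * c.factorial : ℝ) / d.factorial := by
  simp [mwt, Fin.prod_univ_three]

lemma mono_eq (a b c : ℕ) (k : ℂ) :
    monomial (ex a b c) k = C k * X 0 ^ a * X 1 ^ b * X 2 ^ c := by
  simp [ex, X_pow_eq_monomial, C_mul_monomial, monomial_mul]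

lemma herm_eq_sum {d n : ℕ} (f g : MvPolynomial (Fin n) ℂ) (s : Finset (Fin n →₀ ℕ))
    (hf : f.support ⊆ s) (hg : g.support ⊆ s) :
    herm d f g = ∑ α ∈ s, (starRingEnd ℂ) (coeff α f) * coeff α g * (mwt d α : ℂ) := by
  refine Finset.sum_subset (Finset.union_subset hf hg) ?_
  intro α _ hα
  rw [Finset.mem_union, not_or, MvPolynomial.notMem_support_iff,
    MvPolynomial.notMem_support_iff] at hα
  rw [hα.1]
  simp

lemma herm_zero {d n : ℕ} (f g : MvPolynomial (Fin n) ℂ)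
    (h : ∀ α, coeff α f = 0 ∨ coeff α g = 0) : herm d f g = 0 := by
  apply Finset.sum_eq_zero
  intro α _
  rcases h α with h | h <;> simp [h]

lemma supp4 (a b c d : ℂ) (α β γ δ : Fin 3 →₀ ℕ) :
    (monomial α a + monomial β b + monomial γ c + monomial δ d).support ⊆ {α, β, γ, δ} := by
  intro x hx
  rw [MvPolynomial.mem_support_iff] at hx
  simp only [coeff_add, coeff_monomial] at hx
  simp only [Finset.mem_insert, Finset.mem_singleton]
  by_contra hc
  push_neg at hc
  apply hx
  rw [if_neg (Ne.symm hc.1), if_neg (Ne.symm hc.2.1), if_neg (Ne.symm hc.2.2.1),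
    if_neg (Ne.symm hc.2.2.2)]
  ring

lemma supp2 (a b : ℂ) (α β : Fin 3 →₀ ℕ) :
    (monomial α a + monomial β b).support ⊆ {α, β} := by
  intro x hx
  rw [MvPolynomial.mem_support_iff] at hx
  simp only [coeff_add, coeff_monomial] at hx
  simp only [Finset.mem_insert, Finset.mem_singleton]
  by_contra hc
  push_neg at hc
  apply hx
  rw [if_neg (Ne.symm hc.1), if_neg (Ne.symm hc.2)]
  ring

variable (b₁ b₂ b₃ : ℝ)

/-- our cubic in monomial form -/
def P : MvPolynomial (Fin 3) ℂ :=
  monomial (ex 0 0 3) (b₃ : ℂ) + monomial (ex 1 1 1) 1 +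
    monomial (ex 0 3 0) (b₂ : ℂ) + monomial (ex 3 0 0) (b₁ : ℂ)

lemma P_eq :
    C (b₃ : ℂ) * (X 2)^3 + X 0 * X 1 * X 2 + C (b₂ : ℂ) * (X 1)^3 + C (b₁ : ℂ) * (X 0)^3
      = P b₁ b₂ b₃ := by
  simp only [P, mono_eq, C_1]
  ring

lemma suppP : (P b₁ b₂ b₃).support ⊆ {ex 0 0 3, ex 1 1 1, ex 0 3 0, ex 3 0 0} := by
  rw [P]; exact supp4 _ _ _ _ _ _ _ _

lemma herm33 : herm 3 (P b₁ b₂ b₃) (P b₁ b₂ b₃) = ((b₁^2 + b₂^2 + b₃^2 + 1/6 : ℝ) : ℂ) := by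
  rw [herm_eq_sum _ _ {ex 0 0 3, ex 1 1 1, ex 0 3 0, ex 3 0 0} (suppP _ _ _) (suppP _ _ _)]
  rw [Finset.sum_insert (by simp), Finset.sum_insert (by simp), Finset.sum_insert (by simp),
    Finset.sum_singleton]
  simp only [P, coeff_add, coeff_monomial, ex_inj, mwt_ex, Complex.conj_ofReal, _root_.map_one]
  norm_num [Nat.factorial]
  push_cast
  ring

lemma pd0 : pderiv 0 (P b₁ b₂ b₃) =
    monomial (ex 0 1 1) (1 : ℂ) + monomial (ex 2 0 0) ((b₁ : ℂ) * 3) := by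
  simp only [P, map_add, pderiv_monomial, single0, ex_sub, ex_apply0]
  simp

lemma pd1 : pderiv 1 (P b₁ b₂ b₃) =
    monomial (ex 1 0 1) (1 : ℂ) + monomial (ex 0 2 0) ((b₂ : ℂ) * 3) := by
  simp only [P, map_add, pderiv_monomial, single1, ex_sub, ex_apply1]
  simp

lemma pd2 : pderiv 2 (P b₁ b₂ b₃) =
    monomial (ex 0 0 2) ((b₃ : ℂ) * 3) + monomial (ex 1 1 0) (1 : ℂ) := by
  simp only [P, map_add, pderiv_monomial, single2, ex_sub, ex_apply2]
  simp

lemma hermDiag0 : herm 2 (pderiv 0 (P b₁ b₂ b₃)) (pderiv 0 (P b₁ b₂ b₃)) =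
    ((9 * b₁^2 + 1/2 : ℝ) : ℂ) := by
  rw [pd0, herm_eq_sum _ _ {ex 0 1 1, ex 2 0 0} (supp2 _ _ _ _) (supp2 _ _ _ _)]
  rw [Finset.sum_insert (by simp), Finset.sum_singleton]
  simp only [coeff_add, coeff_monomial, ex_inj, mwt_ex, Complex.conj_ofReal, _root_.map_one,
    _root_.map_mul]
  norm_num [Nat.factorial]
  rw [show (starRingEnd ℂ) 3 = 3 from map_ofNat _ 3]
  push_cast
  ring

lemma hermDiag1 : herm 2 (pderiv 1 (P b₁ b₂ b₃)) (pderiv 1 (P b₁ b₂ b₃)) =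
    ((9 * b₂^2 + 1/2 : ℝ) : ℂ) := by
  rw [pd1, herm_eq_sum _ _ {ex 1 0 1, ex 0 2 0} (supp2 _ _ _ _) (supp2 _ _ _ _)]
  rw [Finset.sum_insert (by simp), Finset.sum_singleton]
  simp only [coeff_add, coeff_monomial, ex_inj, mwt_ex, Complex.conj_ofReal, _root_.map_one,
    _root_.map_mul]
  norm_num [Nat.factorial]
  rw [show (starRingEnd ℂ) 3 = 3 from map_ofNat _ 3]
  push_cast
  ring

lemma hermDiag2 : herm 2 (pderiv 2 (P b₁ b₂ b₃)) (pderiv 2 (P b₁ b₂ b₃)) =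
    ((9 * b₃^2 + 1/2 : ℝ) : ℂ) := by
  rw [pd2, herm_eq_sum _ _ {ex 0 0 2, ex 1 1 0} (supp2 _ _ _ _) (supp2 _ _ _ _)]
  rw [Finset.sum_insert (by simp), Finset.sum_singleton]
  simp only [coeff_add, coeff_monomial, ex_inj, mwt_ex, Complex.conj_ofReal, _root_.map_one,
    _root_.map_mul]
  norm_num [Nat.factorial]
  rw [show (starRingEnd ℂ) 3 = 3 from map_ofNat _ 3]
  push_cast
  ring

lemma herm2_of_pairs (f g : MvPolynomial (Fin 3) ℂ) (α₁ α₂ : Fin 3 →₀ ℕ) (a₁ a₂ : ℂ)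
    (hf : f = monomial α₁ a₁ + monomial α₂ a₂)
    (h1 : coeff α₁ g = 0) (h2 : coeff α₂ g = 0) : herm 2 f g = 0 := by
  apply herm_zero
  intro α
  by_cases e1 : α₁ = α
  · right; rw [← e1]; exact h1
  by_cases e2 : α₂ = α
  · right; rw [← e2]; exact h2
  · left; rw [hf]; simp [coeff_monomial, e1, e2]

lemma hermOff10 : herm 2 (pderiv (1 : Fin 3) (P b₁ b₂ b₃)) (pderiv (0 : Fin 3) (P b₁ b₂ b₃)) = 0 := by
  refine herm2_of_pairs _ _ _ _ _ _ (pd1 b₁ b₂ b₃) ?_ ?_ <;>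
    rw [pd0] <;> simp [coeff_monomial]

lemma hermOff20 : herm 2 (pderiv (2 : Fin 3) (P b₁ b₂ b₃)) (pderiv (0 : Fin 3) (P b₁ b₂ b₃)) = 0 := by
  refine herm2_of_pairs _ _ _ _ _ _ (pd2 b₁ b₂ b₃) ?_ ?_ <;>
    rw [pd0] <;> simp [coeff_monomial]

lemma hermOff01 : herm 2 (pderiv (0 : Fin 3) (P b₁ b₂ b₃)) (pderiv (1 : Fin 3) (P b₁ b₂ b₃)) = 0 := by
  refine herm2_of_pairs _ _ _ _ _ _ (pd0 b₁ b₂ b₃) ?_ ?_ <;>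
    rw [pd1] <;> simp [coeff_monomial]

lemma hermOff21 : herm 2 (pderiv (2 : Fin 3) (P b₁ b₂ b₃)) (pderiv (1 : Fin 3) (P b₁ b₂ b₃)) = 0 := by
  refine herm2_of_pairs _ _ _ _ _ _ (pd2 b₁ b₂ b₃) ?_ ?_ <;>
    rw [pd1] <;> simp [coeff_monomial]

lemma hermOff02 : herm 2 (pderiv (0 : Fin 3) (P b₁ b₂ b₃)) (pderiv (2 : Fin 3) (P b₁ b₂ b₃)) = 0 := by
  refine herm2_of_pairs _ _ _ _ _ _ (pd0 b₁ b₂ b₃) ?_ ?_ <;>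
    rw [pd2] <;> simp [coeff_monomial]

lemma hermOff12 : herm 2 (pderiv (1 : Fin 3) (P b₁ b₂ b₃)) (pderiv (2 : Fin 3) (P b₁ b₂ b₃)) = 0 := by
  refine herm2_of_pairs _ _ _ _ _ _ (pd1 b₁ b₂ b₃) ?_ ?_ <;>
    rw [pd2] <;> simp [coeff_monomial]

/-- the diagonal entries of the moment matrix, as reals -/
def rv : Fin 3 → ℝ := fun i =>
  2 * ((9 * (![b₁, b₂, b₃] i)^2 + 1/2) / (3 * (b₁^2 + b₂^2 + b₃^2 + 1/6)) - 1)

set_option maxHeartbeats 800000 in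
lemma hermOff (i j : Fin 3) (hij : i ≠ j) :
    herm 2 (pderiv j (P b₁ b₂ b₃)) (pderiv i (P b₁ b₂ b₃)) = 0 := by
  fin_cases i <;> fin_cases j <;> simp only [Fin.zero_eta, Fin.mk_one, Fin.reduceFinMk]
  · exact absurd rfl hij
  · exact hermOff10 b₁ b₂ b₃
  · exact hermOff20 b₁ b₂ b₃
  · exact hermOff01 b₁ b₂ b₃
  · exact absurd rfl hij
  · exact hermOff21 b₁ b₂ b₃
  · exact hermOff02 b₁ b₂ b₃
  · exact hermOff12 b₁ b₂ b₃
  · exact absurd rfl hij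

set_option maxHeartbeats 2000000 in
lemma momentP :
    moment 3 3 (P b₁ b₂ b₃) = Matrix.diagonal (fun i => ((rv b₁ b₂ b₃ i : ℝ) : ℂ)) := by
  have hN : (b₁^2 + b₂^2 + b₃^2 + 1/6 : ℝ) ≠ 0 := by positivity
  have hNC : ((b₁^2 + b₂^2 + b₃^2 + 1/6 : ℝ) : ℂ) ≠ 0 := Complex.ofReal_ne_zero.mpr hN
  have hdiag : ∀ (i : Fin 3) (t : ℝ),
      herm 2 (pderiv i (P b₁ b₂ b₃)) (pderiv i (P b₁ b₂ b₃)) = ((9 * t^2 + 1/2 : ℝ) : ℂ) →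
      rv b₁ b₂ b₃ i = 2 * ((9 * t^2 + 1/2) / (3 * (b₁^2 + b₂^2 + b₃^2 + 1/6)) - 1) →
      moment 3 3 (P b₁ b₂ b₃) i i = ((rv b₁ b₂ b₃ i : ℝ) : ℂ) := by
    intro i t hherm hrv
    simp only [moment, Hmat, Matrix.smul_apply, Matrix.sub_apply, Matrix.smul_apply,
      Matrix.one_apply_eq, herm33, hherm, hrv, smul_eq_mul]
    push_cast
    field_simp
  ext i j
  by_cases hij : i = j
  · subst hij
    rw [Matrix.diagonal_apply_eq]
    fin_cases i <;> simp only [Fin.zero_eta, Fin.mk_one, Fin.reduceFinMk]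
    · exact hdiag 0 b₁ (hermDiag0 b₁ b₂ b₃) (by norm_num [rv])
    · exact hdiag 1 b₂ (hermDiag1 b₁ b₂ b₃) (by norm_num [rv])
    · exact hdiag 2 b₃ (hermDiag2 b₁ b₂ b₃) (by rfl)
  · rw [Matrix.diagonal_apply_ne _ hij]
    simp only [moment, Hmat, Matrix.smul_apply, Matrix.sub_apply, Matrix.smul_apply,
      Matrix.one_apply_ne hij, hermOff b₁ b₂ b₃ i j hij, smul_eq_mul]
    ring

lemma aeval_mono (u : Fin 3 → ℂ) (a b c : ℕ) (k : ℂ) :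
    aeval (fun i => u i • (X i : MvPolynomial (Fin 3) ℂ)) (monomial (ex a b c) k)
      = monomial (ex a b c) (k * u 0 ^ a * u 1 ^ b * u 2 ^ c) := by
  rw [mono_eq, mono_eq]
  simp only [_root_.map_mul, map_pow, aeval_C, aeval_X, smul_pow, smul_eq_C_mul, mul_pow,
    MvPolynomial.algebraMap_eq, C_mul]
  ring

end
end S9

open S9 in
/-- For F = b₃z³ + xyz + b₂y³ + b₁x³ with b₁b₂b₃ ≠ 0 real: if exp(m(F)) fixes F
up to a nonzero scalar, then b₁² = b₂² = b₃². -/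
theorem stmt9 (b₁ b₂ b₃ : ℝ) (hb : b₁ * b₂ * b₃ ≠ 0) (c : ℂ) (hc : c ≠ 0)
    (hfix :
      act 3 (NormedSpace.exp
          (moment 3 3 (C (b₃ : ℂ) * (X 2)^3 + X 0 * X 1 * X 2 +
            C (b₂ : ℂ) * (X 1)^3 + C (b₁ : ℂ) * (X 0)^3)))
        (C (b₃ : ℂ) * (X 2)^3 + X 0 * X 1 * X 2 +
          C (b₂ : ℂ) * (X 1)^3 + C (b₁ : ℂ) * (X 0)^3) =
      c • (C (b₃ : ℂ) * (X 2)^3 + X 0 * X 1 * X 2 +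
          C (b₂ : ℂ) * (X 1)^3 + C (b₁ : ℂ) * (X 0)^3)) :
    b₁^2 = b₂^2 ∧ b₂^2 = b₃^2 := by
  obtain ⟨h1, h2, h3⟩ : b₁ ≠ 0 ∧ b₂ ≠ 0 ∧ b₃ ≠ 0 := by
    refine ⟨?_, ?_, ?_⟩ <;> intro h <;> apply hb <;> rw [h] <;> ring
  rw [P_eq, momentP, Matrix.exp_diagonal] at hfix
  have hexp : (NormedSpace.exp fun i => ((rv b₁ b₂ b₃ i : ℝ) : ℂ)) =
      fun i => ((Real.exp (rv b₁ b₂ b₃ i) : ℝ) : ℂ) := by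
    funext i
    rw [Pi.coe_exp, ← Complex.exp_eq_exp_ℂ, Complex.ofReal_exp]
  rw [hexp] at hfix
  set u : Fin 3 → ℂ := fun i => ((Real.exp (rv b₁ b₂ b₃ i) : ℝ) : ℂ) with hu
  have hg : (fun i : Fin 3 => ∑ j, Matrix.diagonal u i j • (X j : MvPolynomial (Fin 3) ℂ))
      = fun i => u i • (X i : MvPolynomial (Fin 3) ℂ) := by
    funext i
    rw [Fin.sum_univ_three]
    fin_cases i <;> simp [Matrix.diagonal]
  rw [show act 3 (Matrix.diagonal u) (P b₁ b₂ b₃) =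
      aeval (fun i => ∑ j, Matrix.diagonal u i j • (X j : MvPolynomial (Fin 3) ℂ))
        (P b₁ b₂ b₃) from rfl, hg] at hfix
  simp only [P, map_add, aeval_mono, smul_add, smul_monomial, smul_eq_mul, pow_zero,
    mul_one, one_mul] at hfix
  have hc0 : (u 0)^3 = c := by
    have h := congrArg (coeff (ex 3 0 0)) hfix
    simp [coeff_monomial] at h
    have hbne : ((b₁ : ℝ) : ℂ) ≠ 0 := Complex.ofReal_ne_zero.mpr h1
    exact mul_left_cancel₀ hbne (h.trans (mul_comm c _))
  have hc1 : (u 1)^3 = c := by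
    have h := congrArg (coeff (ex 0 3 0)) hfix
    simp [coeff_monomial] at h
    have hbne : ((b₂ : ℝ) : ℂ) ≠ 0 := Complex.ofReal_ne_zero.mpr h2
    exact mul_left_cancel₀ hbne (h.trans (mul_comm c _))
  have hc2 : (u 2)^3 = c := by
    have h := congrArg (coeff (ex 0 0 3)) hfix
    simp [coeff_monomial] at h
    have hbne : ((b₃ : ℝ) : ℂ) ≠ 0 := Complex.ofReal_ne_zero.mpr h3
    exact mul_left_cancel₀ hbne (h.trans (mul_comm c _))
  have key : ∀ i j : Fin 3, (u i)^3 = (u j)^3 → rv b₁ b₂ b₃ i = rv b₁ b₂ b₃ j := by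
    intro i j hij
    simp only [hu] at hij
    have : (Real.exp (rv b₁ b₂ b₃ i))^3 = (Real.exp (rv b₁ b₂ b₃ j))^3 := by
      exact_mod_cast hij
    rw [← Real.exp_nat_mul, ← Real.exp_nat_mul] at this
    have h3' := Real.exp_eq_exp.mp this
    push_cast at h3'
    linarith
  have hr01 : rv b₁ b₂ b₃ 0 = rv b₁ b₂ b₃ 1 := key 0 1 (by rw [hc0, hc1])
  have hr12 : rv b₁ b₂ b₃ 1 = rv b₁ b₂ b₃ 2 := key 1 2 (by rw [hc1, hc2])
  have hN : (0:ℝ) < b₁^2 + b₂^2 + b₃^2 + 1/6 := by positivity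
  simp only [rv, Matrix.cons_val_zero, Matrix.cons_val_one, Matrix.head_cons,
    Matrix.cons_val_two, Matrix.tail_cons] at hr01 hr12
  constructor
  · have := hr01
    field_simp at this
    linarith
  · have := hr12
    field_simp at this
    linarith
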